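/- Let S be a species tree on n ≥ 2 leaves and let α ∈ [0,1]. Then the diameter of PLR over 𝖦^S satisfies diam(PLR, S) = 2α·H(S) + (1−α)(2n−2); that is, PLR(𝒢₁, 𝒢₂) ≤ 2α·H(S) + (1−α)(2n−2) for all 𝒢₁, 𝒢₂ ∈ 𝖦^S, and there exist 𝒢₁, 𝒢₂ ∈ 𝖦^S attaining this value. -/

import Mathlib

open SimpleGraph

attribute [local instance] Classical.propDecidable

/-- A rooted tree: a finite connected acyclic graph with a distinguished root. -/
structure RTree (V : Type*) [Fintype V] where
  adj : SimpleGraph V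
  isTree : adj.IsTree
  root : V

variable {V : Type*} [Fintype V]

/-- `Anc T a b` : `a` is an ancestor of `b` (i.e. `b ⪯ a`), expressed as:
`a` lies on the (unique) path from the root to `b`. -/
def Anc (T : RTree V) (a b : V) : Prop :=
  T.adj.dist T.root b = T.adj.dist T.root a + T.adj.dist a b

/-- `IsChild T c p` : `c` is a child of `p`. -/
def IsChild (T : RTree V) (c p : V) : Prop :=
  T.adj.Adj c p ∧ Anc T p c

/-- The set of children of `v`. -/
def childSet (T : RTree V) (v : V) : Set V := {c | IsChild T c v}

/-- A leaf is a node with no children. -/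
def IsLeaf (T : RTree V) (v : V) : Prop := ∀ c, ¬ IsChild T c v

/-- The clade of `v`: the set of leaves descending from `v`. -/
def clade (T : RTree V) (v : V) : Set V := {x | IsLeaf T x ∧ Anc T v x}

/-- `w` is the lowest common ancestor of the set `X` in `T`. -/
def IsLCA (T : RTree V) (X : Set V) (w : V) : Prop :=
  (∀ x ∈ X, Anc T w x) ∧ ∀ w', (∀ x ∈ X, Anc T w' x) → Anc T w' w

/-- A species tree is a rooted binary tree: every internal node has exactly two children. -/
def IsSpeciesTree (S : RTree V) : Prop :=
  ∀ v, ¬ IsLeaf S v → (childSet S v).ncard = 2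

/-- Number of leaves of a rooted tree. -/
noncomputable def numLeaves (T : RTree V) : ℕ := {v | IsLeaf T v}.ncard

/-- `Hsum S` = `H(S)`: the sum of root-to-internal-node distances in `S`. -/
noncomputable def Hsum (S : RTree V) : ℕ :=
  ∑ v : V, if IsLeaf S v then 0 else S.adj.dist S.root v

inductive Evt | dup | spec | extant
deriving DecidableEq

/-- A reconciled gene tree with species tree `S`, whose leaves are labeled bijectively by
the set of genes `Γ`. -/
structure Recon (Γ : Type*) (VG : Type*) (VS : Type*) [Fintype VG] [Fintype VS]
    (S : RTree VS) where
  tree : RTree VG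
  geneLeaf : Γ → VG
  geneLeaf_inj : Function.Injective geneLeaf
  geneLeaf_range : ∀ v, IsLeaf tree v ↔ ∃ g, geneLeaf g = v
  μ : VG → VS
  lbl : VG → Evt
  internal_children : ∀ v, ¬ IsLeaf tree v → 2 ≤ (childSet tree v).ncard
  leaf_species : ∀ v, IsLeaf tree v → IsLeaf S (μ v)
  leaf_lbl : ∀ v, IsLeaf tree v → lbl v = Evt.extant
  internal_lbl : ∀ v, ¬ IsLeaf tree v → lbl v = Evt.dup ∨ lbl v = Evt.spec
  time_consistent : ∀ a b, Anc tree a b → Anc S (μ a) (μ b)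
  spec_two_children : ∀ v, lbl v = Evt.spec →
    ¬ IsLeaf S (μ v) ∧ (childSet tree v).ncard = 2
  spec_separates : ∀ v, lbl v = Evt.spec →
    ∀ v₁ v₂, IsChild tree v₁ v → IsChild tree v₂ v → v₁ ≠ v₂ →
      ∃ s₁ s₂, IsChild S s₁ (μ v) ∧ IsChild S s₂ (μ v) ∧ s₁ ≠ s₂ ∧
        ((Anc S s₁ (μ v₁) ∧ Anc S s₂ (μ v₂)) ∨ (Anc S s₂ (μ v₁) ∧ Anc S s₁ (μ v₂)))

variable {Γ : Type*} {VS VG₁ VG₂ : Type*} [Fintype VS] [Fintype VG₁] [Fintype VG₂]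
  {S : RTree VS}

/-- The clade of a gene tree node, as a set of genes. -/
def gclade (𝒢 : Recon Γ VG₁ VS S) (v : VG₁) : Set Γ :=
  {g | Anc 𝒢.tree v (𝒢.geneLeaf g)}

/-- Two reconciled gene trees (over the same species tree and gene set) are comparable if
corresponding extant genes map to the same species. -/
def Comparable (𝒢₁ : Recon Γ VG₁ VS S) (𝒢₂ : Recon Γ VG₂ VS S) : Prop :=
  ∀ g, 𝒢₁.μ (𝒢₁.geneLeaf g) = 𝒢₂.μ (𝒢₂.geneLeaf g)

/-- `m` is the correspondence map `v ↦ lca_{G₂}(L(G₁(v)))`. -/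
def IsLcaMap (𝒢₁ : Recon Γ VG₁ VS S) (𝒢₂ : Recon Γ VG₂ VS S) (m : VG₁ → VG₂) : Prop :=
  ∀ v, IsLCA 𝒢₂.tree (𝒢₂.geneLeaf '' gclade 𝒢₁ v) (m v)

/-- `μ` is the lca-mapping: every node maps to the lca of the species of its leaf descendants. -/
def UsesLcaMapping (𝒢 : Recon Γ VG₁ VS S) : Prop :=
  ∀ v, IsLCA S (𝒢.μ '' clade 𝒢.tree v) (𝒢.μ v)

/-- The path component `d_path(𝒢₁,𝒢₂)` (with `m` the lca correspondence map). -/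
noncomputable def dPath (𝒢₁ : Recon Γ VG₁ VS S) (𝒢₂ : Recon Γ VG₂ VS S)
    (m : VG₁ → VG₂) : ℕ :=
  ∑ v : VG₁, S.adj.dist (𝒢₁.μ v) (𝒢₂.μ (m v))

/-- The label component `d_lbl(𝒢₁,𝒢₂)`. -/
noncomputable def dLbl (𝒢₁ : Recon Γ VG₁ VS S) (𝒢₂ : Recon Γ VG₂ VS S)
    (m : VG₁ → VG₂) : ℕ :=
  {v : VG₁ | 𝒢₁.lbl v ≠ 𝒢₂.lbl (m v)}.ncard

/-- The asymmetric dissimilarity `d_asym = α·d_path + (1−α)·d_lbl`. -/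
noncomputable def dAsym (α : ℝ) (𝒢₁ : Recon Γ VG₁ VS S) (𝒢₂ : Recon Γ VG₂ VS S)
    (m : VG₁ → VG₂) : ℝ :=
  α * (dPath 𝒢₁ 𝒢₂ m : ℝ) + (1 - α) * (dLbl 𝒢₁ 𝒢₂ m : ℝ)

/-- The Path-Label Reconciliation dissimilarity `PLR(𝒢₁,𝒢₂)`, where `m₁₂`, `m₂₁` are the
lca correspondence maps in the two directions. -/
noncomputable def PLR (α : ℝ) (𝒢₁ : Recon Γ VG₁ VS S) (𝒢₂ : Recon Γ VG₂ VS S)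
    (m₁₂ : VG₁ → VG₂) (m₂₁ : VG₂ → VG₁) : ℝ :=
  dAsym α 𝒢₁ 𝒢₂ m₁₂ + dAsym α 𝒢₂ 𝒢₁ m₂₁

/-- An edge `uv` (with `u` the parent of `v`) is redundant if both endpoints are duplications
mapped to the same species. -/
def RedundantEdge (𝒢 : Recon Γ VG₁ VS S) (u v : VG₁) : Prop :=
  IsChild 𝒢.tree v u ∧ 𝒢.μ u = 𝒢.μ v ∧ 𝒢.lbl u = Evt.dup ∧ 𝒢.lbl v = Evt.dup

/-- A reconciled gene tree is least duplication-resolved if it has no redundant edge. -/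
def LeastDupResolved (𝒢 : Recon Γ VG₁ VS S) : Prop :=
  ∀ u v, ¬ RedundantEdge 𝒢 u v

/-- `𝒢'` is obtained from `𝒢` by contracting the edge `uv` (`u` the parent of `v`), i.e.
deleting `v` and attaching its children to `u`; `φ` is the corresponding quotient map. -/
def IsContractionOf (𝒢 : Recon Γ VG₁ VS S) (u v : VG₁) (𝒢' : Recon Γ VG₂ VS S)
    (φ : VG₁ → VG₂) : Prop :=
  Function.Surjective φ ∧
  φ u = φ v ∧
  (∀ a b, φ a = φ b → a = b ∨ (a = u ∧ b = v) ∨ (a = v ∧ b = u)) ∧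
  (∀ x y, 𝒢'.tree.adj.Adj x y ↔
    ∃ a b, φ a = x ∧ φ b = y ∧ 𝒢.tree.adj.Adj a b ∧ ¬(a = u ∧ b = v) ∧ ¬(a = v ∧ b = u)) ∧
  𝒢'.tree.root = φ 𝒢.tree.root ∧
  (∀ g, 𝒢'.geneLeaf g = φ (𝒢.geneLeaf g)) ∧
  (∀ a, 𝒢'.μ (φ a) = 𝒢.μ a) ∧
  (∀ a, 𝒢'.lbl (φ a) = 𝒢.lbl a)

/-- Symmetrized redundancy relation on nodes. -/
def RedundantAdj (𝒢 : Recon Γ VG₁ VS S) (a b : VG₁) : Prop :=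
  RedundantEdge 𝒢 a b ∨ RedundantEdge 𝒢 b a

/-- `𝒢'` is the least duplication-resolved tree `LR(𝒢)` obtained by contracting every
redundant edge of `𝒢`; `φ` is the corresponding quotient map. -/
def IsLROf (𝒢 : Recon Γ VG₁ VS S) (𝒢' : Recon Γ VG₂ VS S) (φ : VG₁ → VG₂) : Prop :=
  Function.Surjective φ ∧
  (∀ a b, φ a = φ b ↔ Relation.EqvGen (RedundantAdj 𝒢) a b) ∧
  (∀ x y, 𝒢'.tree.adj.Adj x y ↔
    ∃ a b, φ a = x ∧ φ b = y ∧ 𝒢.tree.adj.Adj a b ∧ ¬ RedundantAdj 𝒢 a b) ∧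
  𝒢'.tree.root = φ 𝒢.tree.root ∧
  (∀ g, 𝒢'.geneLeaf g = φ (𝒢.geneLeaf g)) ∧
  (∀ a, 𝒢'.μ (φ a) = 𝒢.μ a) ∧
  (∀ a, 𝒢'.lbl (φ a) = 𝒢.lbl a)

/-- Isomorphism of reconciled gene trees: a leaf-fixing bijection preserving edges,
species maps and event labels. -/
def ReconIso (𝒢₁ : Recon Γ VG₁ VS S) (𝒢₂ : Recon Γ VG₂ VS S) : Prop :=
  ∃ φ : VG₁ ≃ VG₂,
    (∀ g, φ (𝒢₁.geneLeaf g) = 𝒢₂.geneLeaf g) ∧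
    (∀ a b, 𝒢₂.tree.adj.Adj (φ a) (φ b) ↔ 𝒢₁.tree.adj.Adj a b) ∧
    (∀ v, 𝒢₂.μ (φ v) = 𝒢₁.μ v) ∧
    (∀ v, 𝒢₂.lbl (φ v) = 𝒢₁.lbl v)

/-- Exactly one gene per species: the gene set is the set of species leaves, and each gene
resides in its own species. -/
def OneGenePerSpecies (𝒢 : Recon {s : VS // IsLeaf S s} VG₁ VS S) : Prop :=
  ∀ g, 𝒢.μ (𝒢.geneLeaf g) = g.1

namespace TreeAux

variable {T : RTree V}

lemma conn (T : RTree V) : T.adj.Connected := T.isTree.isConnected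

lemma path_unique {u v : V} {p q : T.adj.Walk u v} (hp : p.IsPath) (hq : q.IsPath) : p = q := by
  obtain ⟨w, -, hu⟩ := T.isTree.existsUnique_path u v
  rw [hu p hp, hu q hq]

lemma path_length_eq_dist {u v : V} {p : T.adj.Walk u v} (hp : p.IsPath) :
    p.length = T.adj.dist u v := by
  obtain ⟨w, hw⟩ := (conn T).exists_walk_length_eq_dist u v
  have hb : w.bypass = p := path_unique w.bypass_isPath hp
  have h1 : p.length ≤ w.length := by
    rw [← hb]; exact SimpleGraph.Walk.length_bypass_le w
  have h2 := SimpleGraph.dist_le p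
  omega

lemma exists_path (u v : V) : ∃ p : T.adj.Walk u v, p.IsPath :=
  (T.isTree.existsUnique_path u v).exists

lemma dist_eq_zero {u v : V} (h : T.adj.dist u v = 0) : u = v :=
  ((conn T).dist_eq_zero_iff).mp h

lemma dist_pos {u v : V} (h : u ≠ v) : 0 < T.adj.dist u v :=
  (conn T).pos_dist_of_ne h

lemma dist_adj {u v : V} (h : T.adj.Adj u v) : T.adj.dist u v = 1 :=
  (SimpleGraph.dist_eq_one_iff_adj).mpr h

lemma anc_refl (a : V) : Anc T a a := by
  simp [Anc, SimpleGraph.dist_self]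

lemma anc_root (b : V) : Anc T T.root b := by
  simp [Anc, SimpleGraph.dist_self]

lemma anc_trans {a b c : V} (h1 : Anc T a b) (h2 : Anc T b c) : Anc T a c := by
  unfold Anc at *
  have t1 := (conn T).dist_triangle (u := a) (v := b) (w := c)
  have t2 := (conn T).dist_triangle (u := T.root) (v := a) (w := c)
  omega

lemma anc_antisymm {a b : V} (h1 : Anc T a b) (h2 : Anc T b a) : a = b := by
  unfold Anc at *
  have : T.adj.dist a b = 0 := by omega
  exact dist_eq_zero this

lemma anc_depth_le {a b : V} (h : Anc T a b) :
    T.adj.dist T.root a ≤ T.adj.dist T.root b := by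
  unfold Anc at h; omega

lemma anc_eq_of_depth_le {a b : V} (h : Anc T a b)
    (hd : T.adj.dist T.root b ≤ T.adj.dist T.root a) : a = b := by
  unfold Anc at h
  exact dist_eq_zero (by omega : T.adj.dist a b = 0)

lemma anc_of_mem_support {a b : V} {p : T.adj.Walk T.root b} (hp : p.IsPath)
    (ha : a ∈ p.support) : Anc T a b := by
  have hsplit := p.take_spec ha
  have hlen : (p.takeUntil a ha).length + (p.dropUntil a ha).length = p.length := by
    have := congrArg SimpleGraph.Walk.length hsplit
    rwa [SimpleGraph.Walk.length_append] at this
  rw [path_length_eq_dist hp, path_length_eq_dist (hp.takeUntil ha),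
    path_length_eq_dist (hp.dropUntil ha)] at hlen
  exact hlen.symm

lemma mem_support_of_anc {a b : V} {p : T.adj.Walk T.root b} (hp : p.IsPath)
    (h : Anc T a b) : a ∈ p.support := by
  obtain ⟨q1, hq1⟩ := exists_path (T := T) T.root a
  obtain ⟨q2, hq2⟩ := exists_path (T := T) a b
  have hlen : (q1.append q2).length = T.adj.dist T.root b := by
    rw [SimpleGraph.Walk.length_append, path_length_eq_dist hq1, path_length_eq_dist hq2]
    exact h.symm
  have hpath : (q1.append q2).IsPath := (q1.append q2).isPath_of_length_eq_dist hlen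
  have : q1.append q2 = p := path_unique hpath hp
  rw [← this, SimpleGraph.Walk.mem_support_append_iff]
  left; exact SimpleGraph.Walk.end_mem_support _

lemma anc_comparable {a b c : V} (ha : Anc T a c) (hb : Anc T b c) :
    Anc T a b ∨ Anc T b a := by
  obtain ⟨p, hp⟩ := exists_path (T := T) T.root c
  have hac := mem_support_of_anc hp ha
  have hbc := mem_support_of_anc hp hb
  have hsplit := p.take_spec hbc
  have : a ∈ ((p.takeUntil b hbc).append (p.dropUntil b hbc)).support := by
    rw [hsplit]; exact hac
  rw [SimpleGraph.Walk.mem_support_append_iff] at this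
  rcases this with h1 | h1
  · exact Or.inl (anc_of_mem_support (hp.takeUntil hbc) h1)
  · right
    set q := p.dropUntil b hbc with hqdef
    have hq : q.IsPath := hp.dropUntil hbc
    have haq : a ∈ q.support := h1
    set w := (p.takeUntil b hbc).append (q.takeUntil a haq) with hwdef
    have hwsup : w.support ++ (q.dropUntil a haq).support.tail = p.support := by
      rw [hwdef, SimpleGraph.Walk.support_append, List.append_assoc,
        ← List.tail_append_of_ne_nil (SimpleGraph.Walk.support_ne_nil _),
        ← SimpleGraph.Walk.support_append, q.take_spec haq,
        ← SimpleGraph.Walk.support_append, hsplit]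
    have hw : w.IsPath := by
      rw [SimpleGraph.Walk.isPath_def]
      have hnd : p.support.Nodup := hp.support_nodup
      rw [← hwsup] at hnd
      exact (List.nodup_append.mp hnd).1
    exact anc_of_mem_support hw
      (by rw [hwdef, SimpleGraph.Walk.mem_support_append_iff]
          left; exact SimpleGraph.Walk.end_mem_support _)

end TreeAux

namespace TreeAux

variable {T : RTree V}

lemma child_depth {c v : V} (h : IsChild T c v) :
    T.adj.dist T.root c = T.adj.dist T.root v + 1 := by
  have := h.2
  unfold Anc at this
  rw [this, dist_adj h.1.symm]

lemma anc_of_comparable_depth_le {a b : V} (h : Anc T a b ∨ Anc T b a)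
    (hd : T.adj.dist T.root a ≤ T.adj.dist T.root b) : Anc T a b := by
  rcases h with h | h
  · exact h
  · rw [anc_eq_of_depth_le h hd]; exact anc_refl _

lemma parent_unique {c v v' : V} (h : IsChild T c v) (h' : IsChild T c v') : v = v' := by
  have hc := anc_comparable h.2 h'.2
  have d1 := child_depth h
  have d2 := child_depth h'
  rcases hc with hc | hc
  · exact anc_eq_of_depth_le hc (by omega)
  · exact (anc_eq_of_depth_le hc (by omega)).symm

lemma root_not_child {v : V} : ¬ IsChild T T.root v := by
  rintro ⟨hadj, hanc⟩
  have : v = T.root := anc_antisymm hanc (anc_root v)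
  subst this
  exact T.adj.irrefl hadj

lemma exists_child_of_strict_anc {v w : V} (h : Anc T v w) (hne : v ≠ w) :
    ∃ c, IsChild T c v ∧ Anc T c w := by
  obtain ⟨p, hp⟩ := exists_path (T := T) T.root w
  have hv : v ∈ p.support := mem_support_of_anc hp h
  set q := p.dropUntil v hv with hqdef
  have hq : q.IsPath := hp.dropUntil hv
  cases hq' : q with
  | nil => exact absurd rfl hne
  | @cons _ c _ hadj q' =>
    have hcq : c ∈ q.support := by rw [hq']; simp
    have hcp : c ∈ p.support := SimpleGraph.Walk.support_dropUntil_subset p hv hcq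
    have hcw : Anc T c w := anc_of_mem_support hp hcp
    refine ⟨c, ⟨hadj.symm, ?_⟩, hcw⟩
    rcases anc_comparable hcw h with hcv | hvc
    · -- Anc c v : derive contradiction
      exfalso
      have hq'path : q'.IsPath := by
        rw [hq'] at hq; exact hq.of_cons
      have hql : q.length = T.adj.dist v w := path_length_eq_dist hq
      have hq'l : q'.length = T.adj.dist c w := path_length_eq_dist hq'path
      have hlen : T.adj.dist v w = T.adj.dist c w + 1 := by
        rw [← hql, ← hq'l, hq']; simp [Nat.add_comm]
      have e1 : T.adj.dist T.root c + T.adj.dist c v = T.adj.dist T.root v := hcv.symm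
      have e2 := h
      have e3 := hcw
      unfold Anc at e2 e3
      have hdcv : T.adj.dist c v = 1 := dist_adj hadj.symm
      omega
    · exact hvc

lemma exists_parent {v : V} (h : v ≠ T.root) : ∃ p, IsChild T v p := by
  obtain ⟨p, hp⟩ := exists_path (T := T) T.root v
  set q := p.reverse with hqdef
  have hq : q.IsPath := hp.reverse
  cases hq' : q with
  | nil => exact absurd rfl h
  | @cons _ u _ hadj q' =>
    have huq : u ∈ q.support := by rw [hq']; simp
    have hup : u ∈ p.support := by
      rw [hqdef, SimpleGraph.Walk.support_reverse, List.mem_reverse] at huq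
      exact huq
    exact ⟨u, hadj, anc_of_mem_support hp hup⟩

lemma leaf_anc_eq {a b : V} (hl : IsLeaf T a) (h : Anc T a b) : a = b := by
  by_contra hne
  obtain ⟨c, hc, -⟩ := exists_child_of_strict_anc h hne
  exact hl c hc

lemma exists_lca {X : Set V} (hX : X.Nonempty) : ∃ w, IsLCA T X w := by
  classical
  set A : Finset V := Finset.univ.filter (fun w => ∀ x ∈ X, Anc T w x) with hA
  have hroot : T.root ∈ A := by
    simp only [hA, Finset.mem_filter, Finset.mem_univ, true_and]
    exact fun x _ => anc_root x
  obtain ⟨w, hwA, hwmax⟩ := A.exists_max_image (fun w => T.adj.dist T.root w) ⟨_, hroot⟩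
  simp only [hA, Finset.mem_filter, Finset.mem_univ, true_and] at hwA
  refine ⟨w, hwA, fun w' hw' => ?_⟩
  obtain ⟨x₀, hx₀⟩ := hX
  rcases anc_comparable (hw' x₀ hx₀) (hwA x₀ hx₀) with hc | hc
  · exact hc
  · have hle : T.adj.dist T.root w' ≤ T.adj.dist T.root w := by
      apply hwmax
      simp only [hA, Finset.mem_filter, Finset.mem_univ, true_and]
      exact hw'
    have := anc_eq_of_depth_le hc hle
    rw [this]; exact anc_refl _

lemma lca_unique {X : Set V} {w w' : V} (h : IsLCA T X w) (h' : IsLCA T X w') : w = w' :=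
  anc_antisymm (h'.2 w h.1) (h.2 w' h'.1)

lemma dist_le_of_anc_anc {a b c : V} (ha : Anc T a c) (hb : Anc T b c) :
    T.adj.dist a b ≤ T.adj.dist T.root c := by
  have h := anc_comparable ha hb
  unfold Anc at *
  rcases h with h | h
  · omega
  · rw [show T.adj.dist a b = T.adj.dist b a from SimpleGraph.dist_comm]; omega

lemma ncard_anc (b : V) : {a | Anc T a b}.ncard = T.adj.dist T.root b + 1 := by
  obtain ⟨p, hp⟩ := exists_path (T := T) T.root b
  have hset : {a | Anc T a b} = {a | a ∈ p.support} := by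
    ext a
    exact ⟨fun h => mem_support_of_anc hp h, fun h => anc_of_mem_support hp h⟩
  rw [hset]
  have : {a | a ∈ p.support} = ↑p.support.toFinset := by
    ext a; simp
  rw [this, Set.ncard_coe_finset, List.toFinset_card_of_nodup hp.support_nodup,
    SimpleGraph.Walk.length_support, path_length_eq_dist hp]

lemma ncard_strict_anc (b : V) :
    {a | Anc T a b ∧ a ≠ b}.ncard = T.adj.dist T.root b := by
  have hset : {a | Anc T a b ∧ a ≠ b} = {a | Anc T a b} \ {b} := by
    ext a; simp only [Set.mem_setOf_eq, Set.mem_diff, Set.mem_singleton_iff]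
  rw [hset, Set.ncard_diff_singleton_of_mem (by exact anc_refl b), ncard_anc]
  simp

lemma exists_leaf_below (T : RTree V) (v : V) : (clade T v).Nonempty := by
  suffices H : ∀ k v, Fintype.card V ≤ T.adj.dist T.root v + k → (clade T v).Nonempty by
    exact H (Fintype.card V) v (by omega)
  intro k
  induction k with
  | zero =>
    intro v hv
    exfalso
    have := ncard_anc (T := T) v
    have hle : {a | Anc T a v}.ncard ≤ Fintype.card V := by
      rw [← Nat.card_eq_fintype_card, ← Set.ncard_univ]
      exact Set.ncard_le_ncard (Set.subset_univ _) (Set.toFinite _)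
    omega
  | succ k ih =>
    intro v hv
    by_cases hl : IsLeaf T v
    · exact ⟨v, hl, anc_refl v⟩
    · simp only [IsLeaf, not_forall, not_not] at hl
      obtain ⟨c, hc⟩ := hl
      obtain ⟨x, hx1, hx2⟩ := ih c (by have := child_depth hc; omega)
      exact ⟨x, hx1, anc_trans hc.2 hx2⟩

end TreeAux

namespace TreeAux

variable {T : RTree V}

lemma ncard_filter (B : Set V) : B.ncard = (Finset.univ.filter (· ∈ B)).card := by
  classical
  rw [Set.ncard_eq_toFinset_card B (Set.toFinite B)]
  congr 1; ext x; simp only [Set.Finite.mem_toFinset, Finset.mem_filter, Finset.mem_univ, true_and]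

lemma ncard_eq_sum (P : V → Prop) :
    {x | P x}.ncard = ∑ x : V, if P x then 1 else 0 := by
  classical
  rw [ncard_filter, Finset.card_filter]
  exact Finset.sum_congr rfl fun x _ => by simp [Set.mem_setOf_eq]


lemma ncard_filter' (B : Set V) {inst : DecidablePred (· ∈ B)} :
    B.ncard = (@Finset.filter V (· ∈ B) inst Finset.univ).card := by
  classical
  rw [Set.ncard_eq_toFinset_card B (Set.toFinite B)]
  congr 1
  ext x
  simp only [Set.Finite.mem_toFinset, Finset.mem_filter, Finset.mem_univ, true_and]

lemma ncard_eq_sum' (P : V → Prop) {inst : ∀ x, Decidable (P x)} :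
    {x | P x}.ncard = ∑ x : V, @ite ℕ (P x) (inst x) 1 0 := by
  classical
  rw [ncard_eq_sum]
  refine Finset.sum_congr rfl fun x _ => ?_
  congr

lemma leaf_iff_childSet (v : V) : IsLeaf T v ↔ childSet T v = ∅ := by
  constructor
  · intro h; ext c; simp only [Set.mem_empty_iff_false, iff_false]; exact h c
  · intro h c hc; rw [Set.eq_empty_iff_forall_notMem] at h; exact h c hc

lemma count_lemma (T : RTree V) (B : Set V) (m₀ : V) (hm : m₀ ∈ B)
    (hchild : ∀ v ∈ B, ∀ c, IsChild T c v → c ∈ B)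
    (hnc : ∀ v ∈ B, ¬ IsChild T m₀ v)
    (hpar : ∀ x ∈ B, x ≠ m₀ → ∃ p ∈ B, IsChild T x p) :
    B.ncard = 1 + ∑ v ∈ Finset.univ.filter (· ∈ B), (childSet T v).ncard := by
  classical
  set Bf := Finset.univ.filter (· ∈ B) with hBf
  have hmf : m₀ ∈ Bf := by simp [hBf, hm]
  have hkey : Bf.erase m₀ = Bf.biUnion
      (fun v => Finset.univ.filter (· ∈ childSet T v)) := by
    ext x
    simp only [Finset.mem_erase, Finset.mem_biUnion, Finset.mem_filter, Finset.mem_univ,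
      true_and, hBf]
    constructor
    · rintro ⟨hne, hx⟩
      obtain ⟨p, hpB, hp⟩ := hpar x hx hne
      exact ⟨p, hpB, hp⟩
    · rintro ⟨v, hvB, hc⟩
      exact ⟨fun he => hnc v hvB (he ▸ hc), hchild v hvB x hc⟩
  have hdisj : ∀ v ∈ Bf, ∀ w ∈ Bf, v ≠ w →
      Disjoint (Finset.univ.filter (· ∈ childSet T v))
        (Finset.univ.filter (· ∈ childSet T w)) := by
    intro v _ w _ hvw
    rw [Finset.disjoint_left]
    intro c hc hc'
    simp only [Finset.mem_filter, Finset.mem_univ, true_and] at hc hc'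
    exact hvw (parent_unique hc hc')
  have h1 : Bf.card - 1 = ∑ v ∈ Bf, (childSet T v).ncard := by
    rw [← Finset.card_erase_of_mem hmf, hkey, Finset.card_biUnion hdisj]
    exact Finset.sum_congr rfl fun v _ => (ncard_filter _).symm
  have hpos : 1 ≤ Bf.card := Finset.card_pos.mpr ⟨m₀, hmf⟩
  rw [ncard_filter, ← hBf]
  omega

lemma internal_of_strict_anc {w u : V} (h : Anc T w u) (hne : w ≠ u) : ¬ IsLeaf T w := by
  obtain ⟨c, hc, -⟩ := exists_child_of_strict_anc h hne
  exact fun hl => hl c hc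

lemma clade_mono {v w : V} (h : Anc T v w) : clade T w ⊆ clade T v :=
  fun x hx => ⟨hx.1, anc_trans h hx.2⟩

lemma children_eq_of_common_desc {v c₁ c₂ x : V} (h1 : IsChild T c₁ v) (h2 : IsChild T c₂ v)
    (a1 : Anc T c₁ x) (a2 : Anc T c₂ x) : c₁ = c₂ := by
  have d1 := child_depth h1
  have d2 := child_depth h2
  rcases anc_comparable a1 a2 with h | h
  · exact anc_eq_of_depth_le h (by omega)
  · exact (anc_eq_of_depth_le h (by omega)).symm

lemma clade_disjoint_children {v c₁ c₂ : V} (h1 : IsChild T c₁ v) (h2 : IsChild T c₂ v)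
    (hne : c₁ ≠ c₂) : Disjoint (clade T c₁) (clade T c₂) := by
  rw [Set.disjoint_left]
  rintro x ⟨-, hx1⟩ ⟨-, hx2⟩
  exact hne (children_eq_of_common_desc h1 h2 hx1 hx2)

lemma leaf_clade {v : V} (h : IsLeaf T v) : clade T v = {v} := by
  ext x
  simp only [clade, Set.mem_setOf_eq, Set.mem_singleton_iff]
  constructor
  · rintro ⟨-, hx⟩; exact (leaf_anc_eq h hx).symm
  · rintro rfl; exact ⟨h, anc_refl _⟩

lemma clade_ncard_pos (T : RTree V) (v : V) : 1 ≤ (clade T v).ncard :=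
  (Set.ncard_pos (Set.toFinite _)).mpr (exists_leaf_below T v)

lemma root_eq_of_anc {w : V} (h : Anc T w T.root) : w = T.root :=
  anc_antisymm h (anc_root w)

/-- For any node `w` in a binary tree: `#leaves below w = #internal below w + 1`. -/
lemma binary_subtree_count {S : RTree V} (hS : ∀ v, ¬ IsLeaf S v → (childSet S v).ncard = 2)
    (w : V) :
    (clade S w).ncard = {u | ¬ IsLeaf S u ∧ Anc S w u}.ncard + 1 := by
  classical
  set B : Set V := {u | Anc S w u} with hB
  have hcount := count_lemma S B w (anc_refl w)
    (fun v hv c hc => anc_trans hv hc.2)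
    (by
      rintro v hv ⟨hadj, hanc⟩
      have : v = w := anc_antisymm hanc hv
      subst this
      exact S.adj.irrefl hadj)
    (by
      intro x hx hne
      have hxr : x ≠ S.root := by
        rintro rfl
        exact hne (root_eq_of_anc hx).symm
      obtain ⟨p, hp⟩ := exists_parent hxr
      refine ⟨p, ?_, hp⟩
      have hdp := child_depth hp
      have hdx : S.adj.dist S.root w < S.adj.dist S.root x := by
        have h1 : Anc S w x := hx
        unfold Anc at h1
        have h2 := dist_pos (T := S) (Ne.symm hne)
        omega
      exact anc_of_comparable_depth_le (anc_comparable hx hp.2) (by omega))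
  have e1 : {u | ¬ IsLeaf S u ∧ Anc S w u}.ncard =
      ((Finset.univ.filter (· ∈ B)).filter (fun u => ¬ IsLeaf S u)).card := by
    rw [ncard_filter, Finset.filter_filter]
    congr 1
    ext u
    simp only [Finset.mem_filter, Finset.mem_univ, true_and, Set.mem_setOf_eq, hB]
    tauto
  have e2 : ∑ v ∈ Finset.univ.filter (· ∈ B), (childSet S v).ncard =
      2 * ((Finset.univ.filter (· ∈ B)).filter (fun u => ¬ IsLeaf S u)).card := by
    have : ∀ v ∈ Finset.univ.filter (· ∈ B), (childSet S v).ncard =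
        (if ¬ IsLeaf S v then 2 else 0) := by
      intro v _
      by_cases hv : IsLeaf S v
      · simp [hv, (leaf_iff_childSet v).mp hv]
      · simp [hv, hS v hv]
    rw [Finset.sum_congr rfl this, ← Finset.sum_filter, Finset.sum_const, smul_eq_mul,
      mul_comm]
  have esplit : B.ncard = {u | ¬ IsLeaf S u ∧ Anc S w u}.ncard + (clade S w).ncard := by
    have hu : B = {u | ¬ IsLeaf S u ∧ Anc S w u} ∪ clade S w := by
      ext u
      simp only [hB, Set.mem_setOf_eq, Set.mem_union, clade]
      by_cases hl : IsLeaf S u <;> tauto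
    rw [hu, Set.ncard_union_eq ?_ (Set.toFinite _) (Set.toFinite _)]
    rw [Set.disjoint_left]
    rintro x ⟨hx, -⟩ ⟨hx', -⟩
    exact hx hx'
  omega

end TreeAux

namespace ReconAux
open TreeAux

variable {Γ : Type*} {VS VG VG₁ VG₂ : Type*} [Fintype VS] [Fintype VG] [Fintype VG₁]
  [Fintype VG₂] {S : RTree VS}

lemma geneLeaf_isLeaf (𝒢 : Recon Γ VG VS S) (g : Γ) : IsLeaf 𝒢.tree (𝒢.geneLeaf g) :=
  (𝒢.geneLeaf_range _).mpr ⟨g, rfl⟩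

lemma gclade_nonempty (𝒢 : Recon Γ VG VS S) (v : VG) : (gclade 𝒢 v).Nonempty := by
  obtain ⟨x, hx1, hx2⟩ := exists_leaf_below 𝒢.tree v
  obtain ⟨g, hg⟩ := (𝒢.geneLeaf_range x).mp hx1
  exact ⟨g, show Anc 𝒢.tree v (𝒢.geneLeaf g) by rw [hg]; exact hx2⟩

lemma gclade_mono (𝒢 : Recon Γ VG VS S) {v c : VG} (h : Anc 𝒢.tree v c) :
    gclade 𝒢 c ⊆ gclade 𝒢 v := fun _ hg => anc_trans h hg

lemma gclade_leaf (𝒢 : Recon Γ VG VS S) (g : Γ) : gclade 𝒢 (𝒢.geneLeaf g) = {g} := by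
  ext g'
  simp only [gclade, Set.mem_setOf_eq, Set.mem_singleton_iff]
  constructor
  · intro h
    exact (𝒢.geneLeaf_inj (leaf_anc_eq (geneLeaf_isLeaf 𝒢 g) h)).symm
  · rintro rfl; exact anc_refl _

lemma lcaMap_leaf {𝒢₁ : Recon Γ VG₁ VS S} {𝒢₂ : Recon Γ VG₂ VS S} {m : VG₁ → VG₂}
    (hm : IsLcaMap 𝒢₁ 𝒢₂ m) (g : Γ) : m (𝒢₁.geneLeaf g) = 𝒢₂.geneLeaf g := by
  have h := hm (𝒢₁.geneLeaf g)
  rw [gclade_leaf] at h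
  have h2 : IsLCA 𝒢₂.tree (𝒢₂.geneLeaf '' {g}) (𝒢₂.geneLeaf g) := by
    constructor
    · rintro y ⟨g', hg', rfl⟩
      rw [Set.mem_singleton_iff] at hg'
      subst hg'; exact anc_refl _
    · intro w' hw'; exact hw' _ ⟨g, rfl, rfl⟩
  exact lca_unique h h2

/-- Laminar/forest bound: the number of internal nodes of a gene tree whose gene clade is
contained in a gene subset `Γ'` is smaller than `|Γ'|`. -/
lemma forest_bound (𝒢 : Recon Γ VG VS S) (Γ' : Set Γ)
    (hne : {v | ¬ IsLeaf 𝒢.tree v ∧ gclade 𝒢 v ⊆ Γ'}.Nonempty) :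
    {v | ¬ IsLeaf 𝒢.tree v ∧ gclade 𝒢 v ⊆ Γ'}.ncard + 1 ≤ Γ'.ncard := by
  classical
  have _ : Finite Γ := Finite.of_injective 𝒢.geneLeaf 𝒢.geneLeaf_inj
  set W : Set VG := {v | ¬ IsLeaf 𝒢.tree v ∧ gclade 𝒢 v ⊆ Γ'} with hW
  set C : Set VG := W ∪ (𝒢.geneLeaf '' Γ') with hC
  have hCf : (Finset.univ.filter (· ∈ C)).Nonempty := by
    obtain ⟨v, hv⟩ := hne
    exact ⟨v, by simp [hC, Or.inl hv]⟩
  obtain ⟨mx, hmxC, hmxmin⟩ := Finset.exists_min_image (Finset.univ.filter (· ∈ C))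
    (fun v => 𝒢.tree.adj.dist 𝒢.tree.root v) hCf
  simp only [Finset.mem_filter, Finset.mem_univ, true_and] at hmxC
  -- children of members of W lie in C
  have hchild : ∀ v ∈ W, ∀ c, IsChild 𝒢.tree c v → c ∈ C := by
    intro v hv c hc
    by_cases hl : IsLeaf 𝒢.tree c
    · obtain ⟨g, hg⟩ := (𝒢.geneLeaf_range c).mp hl
      right
      refine ⟨g, ?_, hg⟩
      apply hv.2
      show Anc 𝒢.tree v (𝒢.geneLeaf g)
      rw [hg]; exact hc.2
    · left
      exact ⟨hl, subset_trans (gclade_mono 𝒢 hc.2) hv.2⟩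
  -- children of members of W are distinct from mx
  have hmxnc : ∀ v ∈ W, ¬ IsChild 𝒢.tree mx v := by
    intro v hv hc
    have hvC : v ∈ C := Or.inl hv
    have := hmxmin v (by simp [hvC])
    have := child_depth hc
    omega
  -- the biUnion of child sets
  have hsub : (Finset.univ.filter (· ∈ W)).biUnion
      (fun v => Finset.univ.filter (· ∈ childSet 𝒢.tree v)) ⊆
      (Finset.univ.filter (· ∈ C)).erase mx := by
    intro c hc
    simp only [Finset.mem_biUnion, Finset.mem_filter, Finset.mem_univ, true_and] at hc
    obtain ⟨v, hvW, hcv⟩ := hc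
    rw [Finset.mem_erase]
    refine ⟨fun he => hmxnc v hvW (he ▸ hcv), by simp [hchild v hvW c hcv]⟩
  have hdisj : ∀ v ∈ Finset.univ.filter (· ∈ W), ∀ w ∈ Finset.univ.filter (· ∈ W), v ≠ w →
      Disjoint (Finset.univ.filter (· ∈ childSet 𝒢.tree v))
        (Finset.univ.filter (· ∈ childSet 𝒢.tree w)) := by
    intro v _ w _ hvw
    rw [Finset.disjoint_left]
    intro c hc hc'
    simp only [Finset.mem_filter, Finset.mem_univ, true_and] at hc hc'
    exact hvw (parent_unique hc hc')
  have hcard1 : ∀ v ∈ Finset.univ.filter (· ∈ W),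
      2 ≤ (Finset.univ.filter (· ∈ childSet 𝒢.tree v)).card := by
    intro v hv
    simp only [Finset.mem_filter, Finset.mem_univ, true_and, hW, Set.mem_setOf_eq] at hv
    rw [← ncard_filter]
    exact 𝒢.internal_children v hv.1
  have hbig : 2 * (Finset.univ.filter (· ∈ W)).card ≤
      ((Finset.univ.filter (· ∈ W)).biUnion
        (fun v => Finset.univ.filter (· ∈ childSet 𝒢.tree v))).card := by
    rw [Finset.card_biUnion hdisj]
    calc 2 * (Finset.univ.filter (· ∈ W)).card
        = ∑ _v ∈ Finset.univ.filter (· ∈ W), 2 := by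
          rw [Finset.sum_const, smul_eq_mul, mul_comm]
      _ ≤ _ := Finset.sum_le_sum hcard1
  have hCcard : ((Finset.univ.filter (· ∈ C)).erase mx).card =
      (Finset.univ.filter (· ∈ C)).card - 1 :=
    Finset.card_erase_of_mem (by simp [hmxC])
  have hCle : (Finset.univ.filter (· ∈ C)).card ≤
      (Finset.univ.filter (· ∈ W)).card + Γ'.ncard := by
    rw [← ncard_filter', ← ncard_filter', hC]
    calc (W ∪ 𝒢.geneLeaf '' Γ').ncard ≤ W.ncard + (𝒢.geneLeaf '' Γ').ncard :=
          Set.ncard_union_le _ _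
      _ ≤ W.ncard + Γ'.ncard := by
          gcongr
          exact Set.ncard_image_le (Set.toFinite _)
  have hmono := Finset.card_le_card hsub
  have hWncard : W.ncard = (Finset.univ.filter (· ∈ W)).card := ncard_filter' W
  have hCpos : 1 ≤ (Finset.univ.filter (· ∈ C)).card :=
    Finset.card_pos.mpr ⟨mx, by simp [hmxC]⟩
  omega

end ReconAux


namespace ReconAux
open TreeAux

variable {VS VG₁ VG₂ : Type*} [Fintype VS] [Fintype VG₁] [Fintype VG₂] {S : RTree VS}

lemma per_w_bound (hS : IsSpeciesTree S)
    (𝒢₁ : Recon {s : VS // IsLeaf S s} VG₁ VS S)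
    (x : VG₁ → VS)
    (hxanc : ∀ v g, g ∈ gclade 𝒢₁ v → Anc S (x v) g.1)
    (w : VS) :
    {v | ¬ IsLeaf 𝒢₁.tree v ∧ (Anc S w (x v) ∧ w ≠ x v)}.ncard ≤
      {u | ¬ IsLeaf S u ∧ (Anc S w u ∧ w ≠ u)}.ncard := by
  classical
  by_cases hne : {v | ¬ IsLeaf 𝒢₁.tree v ∧ (Anc S w (x v) ∧ w ≠ x v)}.Nonempty
  swap
  · rw [Set.not_nonempty_iff_eq_empty] at hne
    simp [hne]
  obtain ⟨v₀, hv₀⟩ := hne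
  have hw : ¬ IsLeaf S w := internal_of_strict_anc hv₀.2.1 hv₀.2.2
  obtain ⟨c₁, c₂, hc12, hcs⟩ := Set.ncard_eq_two.mp (hS w hw)
  have hch1 : IsChild S c₁ w := by
    have : c₁ ∈ childSet S w := by rw [hcs]; exact Set.mem_insert _ _
    exact this
  have hch2 : IsChild S c₂ w := by
    have : c₂ ∈ childSet S w := by rw [hcs]; exact Set.mem_insert_of_mem _ rfl
    exact this
  set Γ1 : Set {s : VS // IsLeaf S s} := {g | Anc S c₁ g.1} with hΓ1
  set Γ2 : Set {s : VS // IsLeaf S s} := {g | Anc S c₂ g.1} with hΓ2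
  set W1 : Set VG₁ := {v | ¬ IsLeaf 𝒢₁.tree v ∧ gclade 𝒢₁ v ⊆ Γ1} with hW1
  set W2 : Set VG₁ := {v | ¬ IsLeaf 𝒢₁.tree v ∧ gclade 𝒢₁ v ⊆ Γ2} with hW2
  have hsplit : {v | ¬ IsLeaf 𝒢₁.tree v ∧ (Anc S w (x v) ∧ w ≠ x v)} ⊆ W1 ∪ W2 := by
    rintro v ⟨hint, hanc, hnexv⟩
    obtain ⟨c, hc, hcx⟩ := exists_child_of_strict_anc hanc hnexv
    have hcmem : c ∈ childSet S w := hc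
    rw [hcs] at hcmem
    rcases hcmem with rfl | hcmem
    · exact Or.inl ⟨hint, fun g hg => anc_trans hcx (hxanc v g hg)⟩
    · rw [Set.mem_singleton_iff] at hcmem
      subst hcmem
      exact Or.inr ⟨hint, fun g hg => anc_trans hcx (hxanc v g hg)⟩
  have h1 : {v | ¬ IsLeaf 𝒢₁.tree v ∧ (Anc S w (x v) ∧ w ≠ x v)}.ncard ≤
      W1.ncard + W2.ncard :=
    le_trans (Set.ncard_le_ncard hsplit (Set.toFinite _)) (Set.ncard_union_le _ _)
  have himg : ∀ (c : VS), (Subtype.val '' {g : {s : VS // IsLeaf S s} | Anc S c g.1}) =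
      clade S c := by
    intro c
    ext s
    simp only [Set.mem_image, Set.mem_setOf_eq, clade]
    constructor
    · rintro ⟨g, hg, rfl⟩; exact ⟨g.2, hg⟩
    · rintro ⟨hs, hanc⟩; exact ⟨⟨s, hs⟩, hanc, rfl⟩
  have hg1card : Γ1.ncard = (clade S c₁).ncard := by
    rw [← himg c₁, Set.ncard_image_of_injective _ Subtype.val_injective]
  have hg2card : Γ2.ncard = (clade S c₂).ncard := by
    rw [← himg c₂, Set.ncard_image_of_injective _ Subtype.val_injective]
  have hWc : ∀ (Wi : Set VG₁) (Γi : Set {s : VS // IsLeaf S s}) (ci : VS),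
      Wi = {v | ¬ IsLeaf 𝒢₁.tree v ∧ gclade 𝒢₁ v ⊆ Γi} → Γi.ncard = (clade S ci).ncard →
      Wi.ncard + 1 ≤ (clade S ci).ncard := by
    intro Wi Γi ci hWi hcard
    by_cases hnei : Wi.Nonempty
    · rw [← hcard, hWi]
      exact forest_bound 𝒢₁ Γi (hWi ▸ hnei)
    · rw [Set.not_nonempty_iff_eq_empty] at hnei
      rw [hnei, Set.ncard_empty]
      exact clade_ncard_pos S ci
  have hWc1 := hWc W1 Γ1 c₁ hW1 hg1card
  have hWc2 := hWc W2 Γ2 c₂ hW2 hg2card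
  have hΛ : (clade S c₁).ncard + (clade S c₂).ncard ≤ (clade S w).ncard := by
    rw [← Set.ncard_union_eq (clade_disjoint_children hch1 hch2 hc12) (Set.toFinite _)
      (Set.toFinite _)]
    refine Set.ncard_le_ncard ?_ (Set.toFinite _)
    rintro y (hy | hy)
    · exact clade_mono hch1.2 hy
    · exact clade_mono hch2.2 hy
  have hI := binary_subtree_count hS w
  have hRHSset : {u | ¬ IsLeaf S u ∧ (Anc S w u ∧ w ≠ u)} =
      {u | ¬ IsLeaf S u ∧ Anc S w u} \ {w} := by
    ext u
    simp only [Set.mem_setOf_eq, Set.mem_diff, Set.mem_singleton_iff]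
    constructor
    · rintro ⟨h1, h2, h3⟩; exact ⟨⟨h1, h2⟩, fun he => h3 he.symm⟩
    · rintro ⟨⟨h1, h2⟩, h3⟩; exact ⟨h1, h2, fun he => h3 he.symm⟩
  have hwmem : w ∈ {u | ¬ IsLeaf S u ∧ Anc S w u} := ⟨hw, anc_refl w⟩
  have hRHS : {u | ¬ IsLeaf S u ∧ (Anc S w u ∧ w ≠ u)}.ncard =
      {u | ¬ IsLeaf S u ∧ Anc S w u}.ncard - 1 := by
    rw [hRHSset, Set.ncard_diff_singleton_of_mem hwmem]
  have hpos : 1 ≤ {u | ¬ IsLeaf S u ∧ Anc S w u}.ncard :=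
    (Set.ncard_pos (Set.toFinite _)).mpr ⟨w, hwmem⟩
  omega

lemma dPath_le_Hsum (hS : IsSpeciesTree S)
    (𝒢₁ : Recon {s : VS // IsLeaf S s} VG₁ VS S)
    (𝒢₂ : Recon {s : VS // IsLeaf S s} VG₂ VS S)
    (h1 : OneGenePerSpecies 𝒢₁) (h2 : OneGenePerSpecies 𝒢₂)
    (m : VG₁ → VG₂) (hm : IsLcaMap 𝒢₁ 𝒢₂ m) :
    dPath 𝒢₁ 𝒢₂ m ≤ Hsum S := by
  classical
  have hxe : ∀ v : VG₁, ∃ x, IsLCA S ((fun g => g.1) '' gclade 𝒢₁ v) x :=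
    fun v => exists_lca ((gclade_nonempty 𝒢₁ v).image _)
  choose x hx using hxe
  have hxanc : ∀ v g, g ∈ gclade 𝒢₁ v → Anc S (x v) g.1 :=
    fun v g hg => (hx v).1 _ ⟨g, hg, rfl⟩
  have hanc1 : ∀ v, Anc S (𝒢₁.μ v) (x v) := by
    intro v; apply (hx v).2; rintro s ⟨g, hg, rfl⟩
    have := 𝒢₁.time_consistent v (𝒢₁.geneLeaf g) hg
    rwa [h1 g] at this
  have hanc2 : ∀ v, Anc S (𝒢₂.μ (m v)) (x v) := by
    intro v; apply (hx v).2; rintro s ⟨g, hg, rfl⟩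
    have hmem : 𝒢₂.geneLeaf g ∈ 𝒢₂.geneLeaf '' gclade 𝒢₁ v := ⟨g, hg, rfl⟩
    have := 𝒢₂.time_consistent (m v) (𝒢₂.geneLeaf g) ((hm v).1 _ hmem)
    rwa [h2 g] at this
  have hper : ∀ v, S.adj.dist (𝒢₁.μ v) (𝒢₂.μ (m v)) ≤
      if IsLeaf 𝒢₁.tree v then 0 else S.adj.dist S.root (x v) := by
    intro v
    by_cases hl : IsLeaf 𝒢₁.tree v
    · rw [if_pos hl]
      obtain ⟨g, hg⟩ := (𝒢₁.geneLeaf_range v).mp hl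
      have hmv : m v = 𝒢₂.geneLeaf g := by rw [← hg]; exact lcaMap_leaf hm g
      have heq : 𝒢₁.μ v = 𝒢₂.μ (m v) := by rw [hmv, ← hg, h1 g, h2 g]
      rw [heq, SimpleGraph.dist_self]
    · rw [if_neg hl]
      exact dist_le_of_anc_anc (hanc1 v) (hanc2 v)
  unfold dPath
  calc ∑ v : VG₁, S.adj.dist (𝒢₁.μ v) (𝒢₂.μ (m v))
      ≤ ∑ v : VG₁, if IsLeaf 𝒢₁.tree v then 0 else S.adj.dist S.root (x v) :=
        Finset.sum_le_sum fun v _ => hper v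
    _ = ∑ v : VG₁, ∑ w : VS,
        if (¬ IsLeaf 𝒢₁.tree v ∧ (Anc S w (x v) ∧ w ≠ x v)) then 1 else 0 := by
        refine Finset.sum_congr rfl fun v _ => ?_
        by_cases hl : IsLeaf 𝒢₁.tree v
        · simp [hl]
        · rw [if_neg hl, ← ncard_strict_anc (T := S) (x v), ncard_eq_sum]
          refine Finset.sum_congr rfl fun w _ => ?_
          simp [hl]
    _ = ∑ w : VS, ∑ v : VG₁,
        if (¬ IsLeaf 𝒢₁.tree v ∧ (Anc S w (x v) ∧ w ≠ x v)) then 1 else 0 :=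
        Finset.sum_comm
    _ ≤ ∑ w : VS, ∑ u : VS, if (¬ IsLeaf S u ∧ (Anc S w u ∧ w ≠ u)) then 1 else 0 := by
        refine Finset.sum_le_sum fun w _ => ?_
        rw [← ncard_eq_sum', ← ncard_eq_sum']
        exact per_w_bound hS 𝒢₁ x hxanc w
    _ = Hsum S := by
        rw [Finset.sum_comm]
        unfold Hsum
        refine Finset.sum_congr rfl fun u _ => ?_
        by_cases hl : IsLeaf S u
        · simp [hl]
        · rw [if_neg hl, ← ncard_strict_anc (T := S) u, ncard_eq_sum]
          refine Finset.sum_congr rfl fun w _ => ?_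
          simp [hl]

lemma dLbl_le (hn : 1 ≤ numLeaves S)
    (𝒢₁ : Recon {s : VS // IsLeaf S s} VG₁ VS S)
    (𝒢₂ : Recon {s : VS // IsLeaf S s} VG₂ VS S)
    (m : VG₁ → VG₂) (hm : IsLcaMap 𝒢₁ 𝒢₂ m) :
    dLbl 𝒢₁ 𝒢₂ m + 1 ≤ numLeaves S := by
  classical
  have huniv : (Set.univ : Set {s : VS // IsLeaf S s}).ncard = numLeaves S := by
    rw [Set.ncard_univ]
    exact Nat.card_coe_set_eq _
  have hsub : {v | 𝒢₁.lbl v ≠ 𝒢₂.lbl (m v)} ⊆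
      {v | ¬ IsLeaf 𝒢₁.tree v ∧ gclade 𝒢₁ v ⊆ (Set.univ : Set {s : VS // IsLeaf S s})} := by
    intro v hv
    refine ⟨fun hl => ?_, fun g _ => Set.mem_univ g⟩
    obtain ⟨g, hg⟩ := (𝒢₁.geneLeaf_range v).mp hl
    have hmv : m v = 𝒢₂.geneLeaf g := by rw [← hg]; exact lcaMap_leaf hm g
    have e1 : 𝒢₁.lbl v = Evt.extant := 𝒢₁.leaf_lbl v hl
    have e2 : 𝒢₂.lbl (m v) = Evt.extant := by
      rw [hmv]; exact 𝒢₂.leaf_lbl _ (geneLeaf_isLeaf 𝒢₂ g)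
    exact hv (by rw [e1, e2])
  have hle : dLbl 𝒢₁ 𝒢₂ m ≤
      {v | ¬ IsLeaf 𝒢₁.tree v ∧ gclade 𝒢₁ v ⊆ (Set.univ : Set {s : VS // IsLeaf S s})}.ncard :=
    Set.ncard_le_ncard hsub (Set.toFinite _)
  by_cases hne : {v | ¬ IsLeaf 𝒢₁.tree v ∧
      gclade 𝒢₁ v ⊆ (Set.univ : Set {s : VS // IsLeaf S s})}.Nonempty
  · have := forest_bound 𝒢₁ Set.univ hne
    omega
  · rw [Set.not_nonempty_iff_eq_empty] at hne
    rw [hne, Set.ncard_empty] at hle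
    omega

end ReconAux


namespace WitnessAux
open TreeAux ReconAux

variable {VS : Type*} [Fintype VS] {S : RTree VS}

lemma binary_internal_count (hS : IsSpeciesTree S) :
    numLeaves S = {v | ¬ IsLeaf S v}.ncard + 1 := by
  have h := binary_subtree_count hS S.root
  have e1 : clade S S.root = {v | IsLeaf S v} := by
    ext u; simp only [clade, Set.mem_setOf_eq, and_iff_left_iff_imp]
    exact fun _ => anc_root u
  have e2 : {u | ¬ IsLeaf S u ∧ Anc S S.root u} = {v | ¬ IsLeaf S v} := by
    ext u; simp only [Set.mem_setOf_eq, and_iff_left_iff_imp]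
    exact fun _ => anc_root u
  rw [e1, e2] at h
  exact h

lemma isLCA_clade (hS : IsSpeciesTree S) (v : VS) : IsLCA S (clade S v) v := by
  refine ⟨fun x hx => hx.2, fun w' hw' => ?_⟩
  by_cases hl : IsLeaf S v
  · exact hw' v ⟨hl, anc_refl v⟩
  · obtain ⟨c₁, c₂, hc12, hcs⟩ := Set.ncard_eq_two.mp (hS v hl)
    have hch1 : IsChild S c₁ v := by
      have : c₁ ∈ childSet S v := by rw [hcs]; exact Set.mem_insert _ _
      exact this
    have hch2 : IsChild S c₂ v := by
      have : c₂ ∈ childSet S v := by rw [hcs]; exact Set.mem_insert_of_mem _ rfl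
      exact this
    obtain ⟨x₁, hx₁⟩ := exists_leaf_below S c₁
    obtain ⟨x₂, hx₂⟩ := exists_leaf_below S c₂
    have hx₁v : x₁ ∈ clade S v := clade_mono hch1.2 hx₁
    have hx₂v : x₂ ∈ clade S v := clade_mono hch2.2 hx₂
    have hw1 := hw' x₁ hx₁v
    rcases anc_comparable hw1 hx₁v.2 with h | h
    · exact h
    · by_cases hev : w' = v
      · rw [hev]; exact anc_refl v
      · exfalso
        obtain ⟨c, hc, hcw⟩ := exists_child_of_strict_anc h (fun he => hev he.symm)
        have e1 : c = c₁ :=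
          children_eq_of_common_desc hc hch1 (anc_trans hcw hw1) hx₁.2
        have e2 : c = c₂ :=
          children_eq_of_common_desc hc hch2 (anc_trans hcw (hw' x₂ hx₂v)) hx₂.2
        exact hc12 (e1 ▸ e2)

noncomputable def specRecon (hS : IsSpeciesTree S) :
    Recon {s : VS // IsLeaf S s} VS VS S where
  tree := S
  geneLeaf := fun g => g.1
  geneLeaf_inj := fun _ _ h => Subtype.ext h
  geneLeaf_range := fun v =>
    ⟨fun h => ⟨⟨v, h⟩, rfl⟩, fun h => by obtain ⟨g, hg⟩ := h; exact hg ▸ g.2⟩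
  μ := fun v => v
  lbl := fun v => if IsLeaf S v then Evt.extant else Evt.spec
  internal_children := fun v h => le_of_eq (hS v h).symm
  leaf_species := fun _ h => h
  leaf_lbl := fun _ h => if_pos h
  internal_lbl := fun _ h => Or.inr (if_neg h)
  time_consistent := fun _ _ h => h
  spec_two_children := fun v h => by
    by_cases hl : IsLeaf S v
    · simp only [if_pos hl] at h; exact absurd h (by simp)
    · exact ⟨hl, hS v hl⟩
  spec_separates := fun v _ v₁ v₂ h₁ h₂ hne =>
    ⟨v₁, v₂, h₁, h₂, hne, Or.inl ⟨anc_refl v₁, anc_refl v₂⟩⟩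

noncomputable def dupRecon (hS : IsSpeciesTree S) :
    Recon {s : VS // IsLeaf S s} VS VS S where
  tree := S
  geneLeaf := fun g => g.1
  geneLeaf_inj := fun _ _ h => Subtype.ext h
  geneLeaf_range := fun v =>
    ⟨fun h => ⟨⟨v, h⟩, rfl⟩, fun h => by obtain ⟨g, hg⟩ := h; exact hg ▸ g.2⟩
  μ := fun v => if IsLeaf S v then v else S.root
  lbl := fun v => if IsLeaf S v then Evt.extant else Evt.dup
  internal_children := fun v h => le_of_eq (hS v h).symm
  leaf_species := fun v h => by simp only [if_pos h]; exact h
  leaf_lbl := fun _ h => if_pos h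
  internal_lbl := fun _ h => Or.inl (if_neg h)
  time_consistent := fun a b h => by
    by_cases hl : IsLeaf S a
    · have hba : a = b := leaf_anc_eq hl h
      rw [hba]; exact anc_refl _
    · simp only [if_neg hl]; exact anc_root _
  spec_two_children := fun v h => by
    by_cases hl : IsLeaf S v <;> simp [hl] at h
  spec_separates := fun v h => by
    by_cases hl : IsLeaf S v <;> simp [hl] at h

lemma image_gclade_spec (hS : IsSpeciesTree S) (v : VS) :
    (fun g : {s : VS // IsLeaf S s} => g.1) '' gclade (specRecon hS) v = clade S v := by
  ext s
  simp only [Set.mem_image, gclade, Set.mem_setOf_eq, clade]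
  constructor
  · rintro ⟨g, hg, rfl⟩; exact ⟨g.2, hg⟩
  · rintro ⟨hs, hanc⟩; exact ⟨⟨s, hs⟩, hanc, rfl⟩

lemma image_gclade_dup (hS : IsSpeciesTree S) (v : VS) :
    (fun g : {s : VS // IsLeaf S s} => g.1) '' gclade (dupRecon hS) v = clade S v := by
  ext s
  simp only [Set.mem_image, gclade, Set.mem_setOf_eq, clade]
  constructor
  · rintro ⟨g, hg, rfl⟩; exact ⟨g.2, hg⟩
  · rintro ⟨hs, hanc⟩; exact ⟨⟨s, hs⟩, hanc, rfl⟩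

lemma lcaMap_spec_dup (hS : IsSpeciesTree S) :
    IsLcaMap (specRecon hS) (dupRecon hS) id := by
  intro v
  show IsLCA S _ v
  have : (dupRecon hS).geneLeaf '' gclade (specRecon hS) v = clade S v :=
    image_gclade_spec hS v
  rw [this]
  exact isLCA_clade hS v

lemma lcaMap_dup_spec (hS : IsSpeciesTree S) :
    IsLcaMap (dupRecon hS) (specRecon hS) id := by
  intro v
  show IsLCA S _ v
  have : (specRecon hS).geneLeaf '' gclade (dupRecon hS) v = clade S v :=
    image_gclade_dup hS v
  rw [this]
  exact isLCA_clade hS v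

lemma ogs_spec (hS : IsSpeciesTree S) : OneGenePerSpecies (specRecon hS) := fun _ => rfl

lemma ogs_dup (hS : IsSpeciesTree S) : OneGenePerSpecies (dupRecon hS) := fun g =>
  if_pos g.2

lemma dPath_spec_dup (hS : IsSpeciesTree S) : dPath (specRecon hS) (dupRecon hS) id = Hsum S := by
  unfold dPath Hsum
  refine Finset.sum_congr rfl fun v _ => ?_
  by_cases hl : IsLeaf S v
  · show S.adj.dist v (if IsLeaf S v then v else S.root) = _
    rw [if_pos hl, if_pos hl, SimpleGraph.dist_self]
  · show S.adj.dist v (if IsLeaf S v then v else S.root) = _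
    rw [if_neg hl, if_neg hl, SimpleGraph.dist_comm]

lemma dPath_dup_spec (hS : IsSpeciesTree S) : dPath (dupRecon hS) (specRecon hS) id = Hsum S := by
  unfold dPath Hsum
  refine Finset.sum_congr rfl fun v _ => ?_
  by_cases hl : IsLeaf S v
  · show S.adj.dist (if IsLeaf S v then v else S.root) v = _
    rw [if_pos hl, if_pos hl, SimpleGraph.dist_self]
  · show S.adj.dist (if IsLeaf S v then v else S.root) v = _
    rw [if_neg hl, if_neg hl]

lemma dLbl_spec_dup (hS : IsSpeciesTree S) :
    dLbl (specRecon hS) (dupRecon hS) id = {v | ¬ IsLeaf S v}.ncard := by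
  unfold dLbl
  congr 1
  ext v
  simp only [Set.mem_setOf_eq, id]
  show (if IsLeaf S v then Evt.extant else Evt.spec) ≠
    (if IsLeaf S v then Evt.extant else Evt.dup) ↔ _
  by_cases hl : IsLeaf S v <;> simp [hl]

lemma dLbl_dup_spec (hS : IsSpeciesTree S) :
    dLbl (dupRecon hS) (specRecon hS) id = {v | ¬ IsLeaf S v}.ncard := by
  unfold dLbl
  congr 1
  ext v
  simp only [Set.mem_setOf_eq, id]
  show (if IsLeaf S v then Evt.extant else Evt.dup) ≠
    (if IsLeaf S v then Evt.extant else Evt.spec) ↔ _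
  by_cases hl : IsLeaf S v <;> simp [hl]

end WitnessAux


/-- for a species tree `S` with `n ≥ 2` leaves,
`diam(PLR, S) = 2α·H(S) + (1−α)(2n−2)`: it is an upper bound over `𝖦^S`, and it is attained. -/
theorem stmt12 (hS : IsSpeciesTree S) (n : ℕ) (hn : numLeaves S = n) (h2 : 2 ≤ n)
    (α : ℝ) (hα₀ : 0 ≤ α) (hα₁ : α ≤ 1) :
    (∀ (VG₁ VG₂ : Type) [Fintype VG₁] [Fintype VG₂]
      (𝒢₁ : Recon {s : VS // IsLeaf S s} VG₁ VS S)
      (𝒢₂ : Recon {s : VS // IsLeaf S s} VG₂ VS S),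
      OneGenePerSpecies 𝒢₁ → OneGenePerSpecies 𝒢₂ →
      ∀ (m₁₂ : VG₁ → VG₂) (m₂₁ : VG₂ → VG₁),
        IsLcaMap 𝒢₁ 𝒢₂ m₁₂ → IsLcaMap 𝒢₂ 𝒢₁ m₂₁ →
        PLR α 𝒢₁ 𝒢₂ m₁₂ m₂₁ ≤ 2 * α * (Hsum S : ℝ) + (1 - α) * (2 * (n : ℝ) - 2)) ∧
    (∃ (𝒢₁ 𝒢₂ : Recon {s : VS // IsLeaf S s} VS VS S) (m₁₂ m₂₁ : VS → VS),
      OneGenePerSpecies 𝒢₁ ∧ OneGenePerSpecies 𝒢₂ ∧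
      IsLcaMap 𝒢₁ 𝒢₂ m₁₂ ∧ IsLcaMap 𝒢₂ 𝒢₁ m₂₁ ∧
      PLR α 𝒢₁ 𝒢₂ m₁₂ m₂₁ = 2 * α * (Hsum S : ℝ) + (1 - α) * (2 * (n : ℝ) - 2)) := by
  constructor
  · intro VG₁ VG₂ _ _ 𝒢₁ 𝒢₂ h1 h2 m₁₂ m₂₁ hm₁₂ hm₂₁
    have hp12 := ReconAux.dPath_le_Hsum hS 𝒢₁ 𝒢₂ h1 h2 m₁₂ hm₁₂
    have hp21 := ReconAux.dPath_le_Hsum hS 𝒢₂ 𝒢₁ h2 h1 m₂₁ hm₂₁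
    have hone : 1 ≤ numLeaves S := by omega
    have hl12 := ReconAux.dLbl_le hone 𝒢₁ 𝒢₂ m₁₂ hm₁₂
    have hl21 := ReconAux.dLbl_le hone 𝒢₂ 𝒢₁ m₂₁ hm₂₁
    rw [hn] at hl12 hl21
    unfold PLR dAsym
    have c1 : (dPath 𝒢₁ 𝒢₂ m₁₂ : ℝ) ≤ (Hsum S : ℝ) := Nat.cast_le.mpr hp12
    have c2 : (dPath 𝒢₂ 𝒢₁ m₂₁ : ℝ) ≤ (Hsum S : ℝ) := Nat.cast_le.mpr hp21
    have c3 : (dLbl 𝒢₁ 𝒢₂ m₁₂ : ℝ) ≤ (n : ℝ) - 1 := by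
      have := (Nat.cast_le (α := ℝ)).mpr hl12
      push_cast at this
      linarith
    have c4 : (dLbl 𝒢₂ 𝒢₁ m₂₁ : ℝ) ≤ (n : ℝ) - 1 := by
      have := (Nat.cast_le (α := ℝ)).mpr hl21
      push_cast at this
      linarith
    have hα2 : (0:ℝ) ≤ 1 - α := by linarith
    nlinarith [mul_le_mul_of_nonneg_left c1 hα₀, mul_le_mul_of_nonneg_left c2 hα₀,
      mul_le_mul_of_nonneg_left c3 hα2, mul_le_mul_of_nonneg_left c4 hα2]
  · refine ⟨WitnessAux.specRecon hS, WitnessAux.dupRecon hS, id, id,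
      WitnessAux.ogs_spec hS, WitnessAux.ogs_dup hS,
      WitnessAux.lcaMap_spec_dup hS, WitnessAux.lcaMap_dup_spec hS, ?_⟩
    have hcount := WitnessAux.binary_internal_count hS
    rw [hn] at hcount
    have hI : (({v | ¬ IsLeaf S v}.ncard : ℕ) : ℝ) = (n : ℝ) - 1 := by
      have := congrArg (Nat.cast : ℕ → ℝ) hcount
      push_cast at this
      linarith
    unfold PLR dAsym
    rw [WitnessAux.dPath_spec_dup hS, WitnessAux.dPath_dup_spec hS,
      WitnessAux.dLbl_spec_dup hS, WitnessAux.dLbl_dup_spec hS, hI]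
    ring
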